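/- For any finite sequence τ of distinct natural numbers and any natural number k not occurring in τ, aid f(k,τ) = aid τ + |τ_{<k}|, where |τ_{<k}| denotes the number of letters of τ that are less than k. -/

import Mathlib

namespace PaperStats

/-- `des w` is the number of descents of the word `w` (0-indexed positions `i`
with `w(i) > w(i+1)`). -/
def des (w : List ℕ) : ℕ :=
  ((Finset.range (w.length - 1)).filter fun i => w.getD (i + 1) 0 < w.getD i 0).card

/-- `inv w` is the number of inversions of the word `w`: pairs of positions
`i < j` with `w(i) > w(j)`. -/
def inv (w : List ℕ) : ℕ :=
  ((Finset.range w.length ×ˢ Finset.range w.length).filter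
    fun p => p.1 < p.2 ∧ w.getD p.2 0 < w.getD p.1 0).card

/-- An inversion `(i,j)` of `w` is admissible if either `w(j) < w(j+1)`
(`j` is not the last position and is followed by an ascent), or there is a
position `k` strictly between `i` and `j` with `w(j) > w(k)`. -/
def IsAdmissible (w : List ℕ) (i j : ℕ) : Prop :=
  (j + 1 < w.length ∧ w.getD j 0 < w.getD (j + 1) 0) ∨
    ∃ k, i < k ∧ k < j ∧ w.getD k 0 < w.getD j 0

instance (w : List ℕ) (i j : ℕ) : Decidable (IsAdmissible w i j) :=
  decidable_of_iff ((j + 1 < w.length ∧ w.getD j 0 < w.getD (j + 1) 0) ∨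
      ∃ k ∈ Finset.Ioo i j, w.getD k 0 < w.getD j 0) (by
    unfold IsAdmissible
    simp only [Finset.mem_Ioo, and_assoc])

/-- `ai w` is the number of admissible inversions of `w`. -/
def ai (w : List ℕ) : ℕ :=
  ((Finset.range w.length ×ˢ Finset.range w.length).filter
    fun p => p.1 < p.2 ∧ w.getD p.2 0 < w.getD p.1 0 ∧ IsAdmissible w p.1 p.2).card

/-- `aid w = ai w + des w`. -/
def aid (w : List ℕ) : ℕ := ai w + des w

/-- The statistic `aix`, defined recursively: `aix ∅ = 0`; writing a nonempty
word as `π = α m β`, where `m` is the smallest letter and `α` is the maximal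
prefix not containing `m`, one has `aix π = 1 + aix β` if `α = ∅`,
`aix π = 0` if `β = ∅` (and `α ≠ ∅`), and `aix π = aix α` otherwise. -/
def aix : List ℕ → ℕ
  | [] => 0
  | x :: xs =>
    if (x :: xs).takeWhile (fun a => decide (a ≠ xs.foldr min x)) = [] then
      1 + aix (((x :: xs).dropWhile (fun a => decide (a ≠ xs.foldr min x))).tail)
    else if ((x :: xs).dropWhile (fun a => decide (a ≠ xs.foldr min x))).tail = [] then 0
    else aix ((x :: xs).takeWhile (fun a => decide (a ≠ xs.foldr min x)))
termination_by w => w.length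
decreasing_by
  all_goals have e : List.foldr (fun (y : {y // y ∈ xs}) s => min y.1 s) x xs.attach = xs.foldr min x :=
    List.foldr_attach
  all_goals simp only [e] at *
  · have h1 := (List.dropWhile_sublist (l := x :: xs) (fun a => decide (a ≠ xs.foldr min x))).length_le
    have h2 := List.length_tail (l := (x :: xs).dropWhile (fun a => decide (a ≠ xs.foldr min x)))
    simp only [List.length_cons] at *
    omega
  · rename_i hα hβ
    have h0 : ((x :: xs).takeWhile (fun a => decide (a ≠ xs.foldr min x))) ++
        ((x :: xs).dropWhile (fun a => decide (a ≠ xs.foldr min x))) = x :: xs :=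
      List.takeWhile_append_dropWhile ..
    have h1 : ((x :: xs).dropWhile (fun a => decide (a ≠ xs.foldr min x))) ≠ [] := by
      intro h
      apply hβ
      rw [h]
      rfl
    have h2 := congrArg List.length h0
    simp only [List.length_append, List.length_cons] at h2
    have h3 : 0 < ((x :: xs).dropWhile (fun a => decide (a ≠ xs.foldr min x))).length :=
      List.length_pos_iff.mpr h1
    simp only [List.length_cons]
    omega

/-- The map `f(k,τ)`: with `m` the smallest letter of `τ` together with `k`
(`k` not occurring in `τ`), and `τ = α m β` with `α` the maximal prefix of `τ`
avoiding `m`: `f(k,∅) = k`; `f(k,τ) = kτ` if `k = m`; and for `k > m`,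
`f(k,τ) = f(k,β) m` if `α = ∅`, `f(k,τ) = k m α` if `β = ∅`, and
`f(k,τ) = f(k,α) m β` otherwise. -/
def fkt (k : ℕ) : List ℕ → List ℕ
  | [] => [k]
  | x :: xs =>
    if k < xs.foldr min x then k :: x :: xs
    else if (x :: xs).takeWhile (fun a => decide (a ≠ xs.foldr min x)) = [] then
      fkt k (((x :: xs).dropWhile (fun a => decide (a ≠ xs.foldr min x))).tail) ++
        [xs.foldr min x]
    else if ((x :: xs).dropWhile (fun a => decide (a ≠ xs.foldr min x))).tail = [] then
      k :: xs.foldr min x :: ((x :: xs).takeWhile (fun a => decide (a ≠ xs.foldr min x)))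
    else
      fkt k ((x :: xs).takeWhile (fun a => decide (a ≠ xs.foldr min x))) ++
        xs.foldr min x :: ((x :: xs).dropWhile (fun a => decide (a ≠ xs.foldr min x))).tail
termination_by w => w.length
decreasing_by
  all_goals have e : List.foldr (fun (y : {y // y ∈ xs}) s => min y.1 s) x xs.attach = xs.foldr min x :=
    List.foldr_attach
  all_goals simp only [e] at *
  · have h1 := (List.dropWhile_sublist (l := x :: xs) (fun a => decide (a ≠ xs.foldr min x))).length_le
    have h2 := List.length_tail (l := (x :: xs).dropWhile (fun a => decide (a ≠ xs.foldr min x)))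
    simp only [List.length_cons] at *
    omega
  · rename_i hk hα hβ
    have h0 : ((x :: xs).takeWhile (fun a => decide (a ≠ xs.foldr min x))) ++
        ((x :: xs).dropWhile (fun a => decide (a ≠ xs.foldr min x))) = x :: xs :=
      List.takeWhile_append_dropWhile ..
    have h1 : ((x :: xs).dropWhile (fun a => decide (a ≠ xs.foldr min x))) ≠ [] := by
      intro h
      apply hβ
      rw [h]
      rfl
    have h2 := congrArg List.length h0
    simp only [List.length_append, List.length_cons] at h2
    have h3 : 0 < ((x :: xs).dropWhile (fun a => decide (a ≠ xs.foldr min x))).length :=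
      List.length_pos_iff.mpr h1
    simp only [List.length_cons]
    omega

/-- `ini w` is the first letter of `w`. -/
def ini (w : List ℕ) : ℕ := w.headD 0

/-- The word of a permutation `π ∈ S_n`, namely `π(1) π(2) … π(n)`
(with values in `{1, …, n}`). -/
def permList {n : ℕ} (π : Equiv.Perm (Fin n)) : List ℕ :=
  List.ofFn fun i => (π i : ℕ) + 1

/-- The bijection `φ`: `φ(π) = f(π(1), f(π(2), ⋯ f(π(n), ∅) ⋯ ))`. -/
def phiW (w : List ℕ) : List ℕ := w.foldr fkt []

/-- Helper: `decRun l` splits `l` into its maximal weakly decreasing prefix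
and the rest. -/
def decRun : List ℕ → List ℕ × List ℕ
  | [] => ([], [])
  | [x] => ([x], [])
  | x :: y :: rest =>
    if y ≤ x then ((x :: (decRun (y :: rest)).1), (decRun (y :: rest)).2)
    else ([x], y :: rest)

theorem decRun_append : ∀ l : List ℕ, (decRun l).1 ++ (decRun l).2 = l
  | [] => rfl
  | [x] => rfl
  | x :: y :: rest => by
    rw [decRun]
    split
    · simpa using decRun_append (y :: rest)
    · rfl

/-- Helper computing the hook factorization of a word from its reversal: the
rightmost hook of the word starts at its rightmost descent top, i.e. it is
obtained by extending the maximal weakly decreasing prefix of the reversed word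
by one more letter; the process is repeated on what remains, and when no
letters usable for a hook remain the word left over is the increasing part
`π₀`. The result is `(π₀, [π₁, …, π_k])`. -/
def hookRev (r : List ℕ) : List ℕ × List (List ℕ) :=
  match h : (decRun r).2 with
  | [] => (r.reverse, [])
  | z :: rest =>
    ((hookRev rest).1, (hookRev rest).2 ++ [z :: (decRun r).1.reverse])
termination_by r.length
decreasing_by
  have h2 := congrArg List.length (decRun_append r)
  rw [h] at h2
  simp only [List.length_append, List.length_cons] at h2
  omega

/-- The hook factorization `(π₀, [π₁, …, π_k])` of a word
`w = π₀ π₁ ⋯ π_k`, where `π₀` is increasing and each `π_i`, `i ≥ 1`, is a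
hook. -/
def hookSplit (w : List ℕ) : List ℕ × List (List ℕ) := hookRev w.reverse

/-- `pix w` is the length of the initial increasing factor `π₀` in the hook
factorization of `w`. -/
def pix (w : List ℕ) : ℕ := (hookSplit w).1.length

/-- `lec w` is the sum of the numbers of inversions of the hooks in the hook
factorization of `w`. -/
def lec (w : List ℕ) : ℕ := ((hookSplit w).2.map inv).sum

/-- A word `w(1) … w(r)` with `r ≥ 2` is a hook if
`w(1) > w(2) ≤ w(3) ≤ ⋯ ≤ w(r)`. -/
def IsHook (w : List ℕ) : Prop :=
  ∃ a b rest, w = a :: b :: rest ∧ b < a ∧ List.Chain' (· ≤ ·) (b :: rest)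

/-- `w(i)` is a left-to-right maximum of `w` if `w(k) < w(i)` for all `k < i`. -/
def IsLRMax (w : List ℕ) (i : ℕ) : Prop := ∀ k < i, w.getD k 0 < w.getD i 0

instance (w : List ℕ) (i : ℕ) : Decidable (IsLRMax w i) := by
  unfold IsLRMax; infer_instance

/-- `mix w` counts the pairs of positions `i < j` such that either
`w(i) > w(j)` and `w(i)` is a left-to-right maximum, or `w(i) < w(j)` and
there is `k < i` with `w(k) > w(j)`. -/
def mix (w : List ℕ) : ℕ :=
  ((Finset.range w.length ×ˢ Finset.range w.length).filter fun p =>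
    p.1 < p.2 ∧ ((w.getD p.2 0 < w.getD p.1 0 ∧ IsLRMax w p.1) ∨
      (w.getD p.1 0 < w.getD p.2 0 ∧ ∃ k ∈ Finset.range p.1, w.getD p.2 0 < w.getD k 0))).card

/-- `das w` counts the positions `i` such that either `w(i) > w(i+1)` and
`w(i)` is a left-to-right maximum, or `w(i) < w(i+1)` and there is `k < i`
with `w(k) > w(i+1)`. -/
def das (w : List ℕ) : ℕ :=
  ((Finset.range (w.length - 1)).filter fun i =>
    (w.getD (i + 1) 0 < w.getD i 0 ∧ IsLRMax w i) ∨
      (w.getD i 0 < w.getD (i + 1) 0 ∧ ∃ k ∈ Finset.range i, w.getD (i + 1) 0 < w.getD k 0)).card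

/-- The values of the left-to-right maxima of a word, listed in increasing
order (which is also their order of occurrence). -/
def lrMaxima : List ℕ → List ℕ
  | [] => []
  | x :: xs => x :: lrMaxima (xs.filter fun a => decide (x < a))
termination_by l => l.length
decreasing_by
  have e : (List.filter (fun (y : {y // y ∈ xs}) => decide (x < y.1)) xs.attach).unattach =
      xs.filter (fun a => decide (x < a)) := by
    rw [List.unattach_filter (g := fun a => decide (x < a)) (hf := fun _ _ => rfl), List.unattach_attach]
  rw [e]
  have := xs.length_filter_le (fun a => decide (x < a))
  simp only [List.length_cons]
  omega

/-- `Bset w m` is the list of entries of `w` that are smaller than `m` and lie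
to the right of (the first occurrence of) `m` in `w`. -/
def Bset (w : List ℕ) (m : ℕ) : List ℕ :=
  ((w.dropWhile fun a => decide (a ≠ m)).tail).filter fun a => decide (a < m)

/-- Helper for `psiS`: replace the letters satisfying `P`, in order, by the
letters of the first list. -/
def replaceSub (P : ℕ → Bool) : List ℕ → List ℕ → List ℕ
  | _, [] => []
  | rs, x :: xs =>
    if P x then rs.headD x :: replaceSub P rs.tail xs else x :: replaceSub P rs xs

/-- `psiS S w` is `ψ_S(w)`: the result of reversing, in place, the subword of
`w` consisting of the entries belonging to `S`. -/
def psiS (S : List ℕ) (w : List ℕ) : List ℕ :=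
  replaceSub (fun a => decide (a ∈ S)) ((w.filter fun a => decide (a ∈ S)).reverse) w

/-- Helper applying the alternating composition
`ψ_{B₁} ∘ ψ_{B₂ ∩ B₁} ∘ ψ_{B₂} ∘ ⋯ ∘ ψ_{B_{k-1}} ∘ ψ_{B_k ∩ B_{k-1}} ∘ ψ_{B_k}`
to `w`, given the list `[B_k, B_{k-1}, …, B₁]`. -/
def psiChain : List (List ℕ) → List ℕ → List ℕ
  | [], w => w
  | [B], w => psiS B w
  | B :: B' :: rest, w => psiChain (B' :: rest) (psiS (B.inter B') (psiS B w))

/-- The Brändén–Claesson bijection `ψ`. -/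
def psi (w : List ℕ) : List ℕ :=
  psiChain (((lrMaxima w).map (Bset w)).reverse) w


lemma getD_mem {l : List ℕ} {n : ℕ} (d : ℕ) (h : n < l.length) : l.getD n d ∈ l := by
  rw [List.getD_eq_getElem _ _ h]; exact List.getElem_mem _

lemma foldr_min_mem (x : ℕ) (xs : List ℕ) : xs.foldr min x ∈ x :: xs := by
  induction xs with
  | nil => simp
  | cons y ys ih =>
    simp only [List.foldr_cons]
    rw [List.mem_cons] at ih
    rcases min_choice y (ys.foldr min x) with h | h <;> rw [h]
    · simp
    · rcases ih with h' | h' <;> simp [h', List.mem_cons]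

lemma foldr_min_le (x : ℕ) (xs : List ℕ) : ∀ a ∈ x :: xs, xs.foldr min x ≤ a := by
  induction xs with
  | nil => simp
  | cons y ys ih =>
    intro a ha
    simp only [List.mem_cons] at ha
    simp only [List.foldr_cons]
    rcases ha with rfl | rfl | ha
    · exact le_trans (min_le_right _ _) (ih a (by simp))
    · exact min_le_left _ _
    · exact le_trans (min_le_right _ _) (ih a (by simp [ha]))

lemma countP_eq_sum (p : ℕ → Bool) (l : List ℕ) :
    l.countP p = ∑ j ∈ Finset.range l.length, if p (l.getD j 0) then 1 else 0 := by
  induction l with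
  | nil => simp
  | cons a l ih =>
    rw [List.countP_cons, List.length_cons, Finset.sum_range_succ']
    simp only [List.getD_cons_succ, List.getD_cons_zero]
    rw [ih]

def cross (γ β : List ℕ) : ℕ := (γ.map fun a => β.countP fun b => decide (b < a)).sum

lemma cross_eq_sum (γ β : List ℕ) :
    cross γ β = ∑ i ∈ Finset.range γ.length, ∑ j ∈ Finset.range β.length,
      if β.getD j 0 < γ.getD i 0 then 1 else 0 := by
  induction γ with
  | nil => simp [cross]
  | cons a γ ih =>
    rw [List.length_cons, Finset.sum_range_succ']
    simp only [List.getD_cons_succ, List.getD_cons_zero]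
    unfold cross at *
    rw [List.map_cons, List.sum_cons, ih, countP_eq_sum]
    simp only [decide_eq_true_eq]
    ring

lemma cross_perm {γ γ' : List ℕ} (h : γ.Perm γ') (β : List ℕ) : cross γ β = cross γ' β :=
  List.Perm.sum_eq (h.map _)

lemma getD_suffix (γ β : List ℕ) (m t : ℕ) :
    (γ ++ m :: β).getD (γ.length + 1 + t) 0 = β.getD t 0 := by
  rw [List.getD_append_right _ _ _ _ (by omega)]
  have e : γ.length + 1 + t - γ.length = t + 1 := by omega
  rw [e, List.getD_cons_succ]

lemma getD_suffix0 (γ β : List ℕ) (m : ℕ) :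
    (γ ++ m :: β).getD (γ.length + 1) 0 = β.getD 0 0 := by
  have := getD_suffix γ β m 0
  simpa using this

lemma getD_mid (γ β : List ℕ) (m : ℕ) : (γ ++ m :: β).getD γ.length 0 = m := by
  rw [List.getD_append_right _ _ _ _ le_rfl]; simp

lemma adm_prefix (γ β : List ℕ) (m : ℕ) (h1 : ∀ a ∈ γ, m < a) {i j : ℕ} (hj : j < γ.length) :
    IsAdmissible (γ ++ m :: β) i j ↔ IsAdmissible γ i j := by
  unfold IsAdmissible
  constructor
  · rintro (⟨h, hlt⟩ | ⟨k, hik, hkj, hlt⟩)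
    · rcases lt_or_ge (j + 1) γ.length with hj1 | hj1
      · left
        rw [List.getD_append _ _ _ _ hj, List.getD_append _ _ _ _ hj1] at hlt
        exact ⟨hj1, hlt⟩
      · exfalso
        have hj1' : j + 1 = γ.length := by omega
        rw [List.getD_append _ _ _ _ hj, hj1', getD_mid] at hlt
        have hmem := h1 _ (getD_mem 0 hj)
        omega
    · right
      rw [List.getD_append _ _ _ _ (by omega), List.getD_append _ _ _ _ hj] at hlt
      exact ⟨k, hik, hkj, hlt⟩
  · rintro (⟨h, hlt⟩ | ⟨k, hik, hkj, hlt⟩)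
    · left
      rw [List.getD_append _ _ _ _ hj, List.getD_append _ _ _ _ h]
      exact ⟨by simp only [List.length_append, List.length_cons]; omega, hlt⟩
    · right
      rw [← List.getD_append _ _ 0 _ (show k < γ.length by omega),
        ← List.getD_append _ _ 0 _ hj] at hlt
      exact ⟨k, hik, hkj, hlt⟩

lemma adm_shift (γ β : List ℕ) (m : ℕ) (i j : ℕ) :
    IsAdmissible (γ ++ m :: β) (γ.length + 1 + i) (γ.length + 1 + j) ↔ IsAdmissible β i j := by
  unfold IsAdmissible
  have hlen : (γ ++ m :: β).length = γ.length + 1 + β.length := by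
    simp only [List.length_append, List.length_cons]; omega
  constructor
  · rintro (⟨h, hlt⟩ | ⟨k, hik, hkj, hlt⟩)
    · left
      have e : γ.length + 1 + j + 1 = γ.length + 1 + (j + 1) := by omega
      rw [e, getD_suffix, getD_suffix] at hlt
      rw [hlen] at h
      exact ⟨by omega, hlt⟩
    · right
      obtain ⟨k', rfl⟩ : ∃ k', k = γ.length + 1 + k' := ⟨k - (γ.length + 1), by omega⟩
      rw [getD_suffix, getD_suffix] at hlt
      exact ⟨k', by omega, by omega, hlt⟩
  · rintro (⟨h, hlt⟩ | ⟨k, hik, hkj, hlt⟩)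
    · left
      have e : γ.length + 1 + j + 1 = γ.length + 1 + (j + 1) := by omega
      rw [e, getD_suffix, getD_suffix]
      exact ⟨by rw [hlen]; omega, hlt⟩
    · right
      refine ⟨γ.length + 1 + k, by omega, by omega, ?_⟩
      rw [getD_suffix, getD_suffix]
      exact hlt

lemma sum_range_split (g b : ℕ) (f : ℕ → ℕ) :
    ∑ i ∈ Finset.range (g + 1 + b), f i
      = (∑ i ∈ Finset.range g, f i) + f g + ∑ i ∈ Finset.range b, f (g + 1 + i) := by
  rw [Finset.sum_range_add, Finset.sum_range_succ]

lemma des_split (γ β : List ℕ) (m : ℕ) (hγ : γ ≠ []) (hβ : β ≠ [])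
    (h1 : ∀ a ∈ γ, m < a) (h2 : ∀ a ∈ β, m < a) :
    des (γ ++ m :: β) = des γ + des β + 1 := by
  have hg : 1 ≤ γ.length := List.length_pos_iff.mpr hγ
  have hb : 1 ≤ β.length := List.length_pos_iff.mpr hβ
  unfold des
  rw [Finset.card_filter, Finset.card_filter, Finset.card_filter]
  have hlen : (γ ++ m :: β).length - 1 = γ.length + β.length := by
    simp only [List.length_append, List.length_cons]; omega
  rw [hlen, Finset.sum_range_add]
  have H1 : (∑ i ∈ Finset.range γ.length,
      if (γ ++ m :: β).getD (i + 1) 0 < (γ ++ m :: β).getD i 0 then 1 else 0)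
      = (∑ i ∈ Finset.range (γ.length - 1), if γ.getD (i + 1) 0 < γ.getD i 0 then 1 else 0)
        + 1 := by
    obtain ⟨a, ha⟩ : ∃ a, γ.length = a + 1 := ⟨γ.length - 1, by omega⟩
    rw [ha, Nat.add_sub_cancel, Finset.sum_range_succ]
    congr 1
    · apply Finset.sum_congr rfl
      intro i hi
      rw [Finset.mem_range] at hi
      rw [List.getD_append _ _ _ _ (by omega), List.getD_append _ _ _ _ (by omega)]
    · rw [← ha, getD_mid, List.getD_append _ _ _ _ (show a < γ.length by omega)]
      have := h1 _ (getD_mem 0 (show a < γ.length by omega))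
      rw [if_pos this]
  have H2 : (∑ x ∈ Finset.range β.length,
      if (γ ++ m :: β).getD (γ.length + x + 1) 0 < (γ ++ m :: β).getD (γ.length + x) 0
        then 1 else 0)
      = ∑ i ∈ Finset.range (β.length - 1), if β.getD (i + 1) 0 < β.getD i 0 then 1 else 0 := by
    obtain ⟨b, hbb⟩ : ∃ b, β.length = b + 1 := ⟨β.length - 1, by omega⟩
    rw [hbb, Nat.add_sub_cancel, Finset.sum_range_succ']
    have e0 : (if (γ ++ m :: β).getD (γ.length + 0 + 1) 0
        < (γ ++ m :: β).getD (γ.length + 0) 0 then 1 else 0) = 0 := by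
      have e1 : γ.length + 0 + 1 = γ.length + 1 + 0 := by omega
      have e2 : γ.length + 0 = γ.length := by omega
      rw [e1, getD_suffix, e2, getD_mid]
      have := h2 _ (getD_mem 0 (show 0 < β.length by omega))
      have h' : ¬ (β.getD 0 0 < m) := by omega
      rw [if_neg h']
    rw [e0, add_zero]
    apply Finset.sum_congr rfl
    intro x hx
    rw [Finset.mem_range] at hx
    have e1 : γ.length + (x + 1) + 1 = γ.length + 1 + (x + 1) := by omega
    have e2 : γ.length + (x + 1) = γ.length + 1 + x := by omega
    rw [e1, e2, getD_suffix, getD_suffix]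
  rw [H1, H2]
  omega
lemma des_snoc (γ : List ℕ) (m : ℕ) (hγ : γ ≠ []) (h1 : ∀ a ∈ γ, m < a) :
    des (γ ++ [m]) = des γ + 1 := by
  have hg : 1 ≤ γ.length := List.length_pos_iff.mpr hγ
  unfold des
  rw [Finset.card_filter, Finset.card_filter]
  have hlen : (γ ++ [m]).length - 1 = γ.length := by
    simp only [List.length_append, List.length_cons, List.length_nil]; omega
  rw [hlen]
  obtain ⟨a, ha⟩ : ∃ a, γ.length = a + 1 := ⟨γ.length - 1, by omega⟩
  rw [ha, Nat.add_sub_cancel, Finset.sum_range_succ]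
  congr 1
  · apply Finset.sum_congr rfl
    intro i hi
    rw [Finset.mem_range] at hi
    rw [List.getD_append _ _ _ _ (by omega), List.getD_append _ _ _ _ (by omega)]
  · rw [← ha, getD_mid, List.getD_append _ _ _ _ (show a < γ.length by omega)]
    have := h1 _ (getD_mem 0 (show a < γ.length by omega))
    rw [if_pos this]

lemma des_cons (β : List ℕ) (m : ℕ) (h2 : ∀ a ∈ β, m < a) :
    des (m :: β) = des β := by
  unfold des
  rw [Finset.card_filter, Finset.card_filter]
  have hlen : (m :: β).length - 1 = β.length := by simp
  rw [hlen]
  rcases Nat.eq_zero_or_pos β.length with hb | hb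
  · rw [hb]; simp
  obtain ⟨b, hbb⟩ : ∃ b, β.length = b + 1 := ⟨β.length - 1, by omega⟩
  rw [hbb, Nat.add_sub_cancel, Finset.sum_range_succ']
  have e0 : (if (m :: β).getD (0 + 1) 0 < (m :: β).getD 0 0 then 1 else 0) = 0 := by
    rw [List.getD_cons_succ, List.getD_cons_zero]
    have := h2 _ (getD_mem 0 (show 0 < β.length by omega))
    rw [if_neg (by omega)]
  rw [e0, add_zero]
  apply Finset.sum_congr rfl
  intro x hx
  rw [List.getD_cons_succ, List.getD_cons_succ]

lemma adm_cons (β : List ℕ) (m i j : ℕ) :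
    IsAdmissible (m :: β) (i + 1) (j + 1) ↔ IsAdmissible β i j := by
  have := adm_shift [] β m i j
  simpa only [List.nil_append, List.length_nil, Nat.zero_add, Nat.add_comm 1] using this

lemma ai_cons (β : List ℕ) (m : ℕ) (h2 : ∀ a ∈ β, m < a) : ai (m :: β) = ai β := by
  unfold ai
  rw [Finset.card_filter, Finset.card_filter, Finset.sum_product, Finset.sum_product,
    List.length_cons, Finset.sum_range_succ']
  have H0 : (∑ j ∈ Finset.range (β.length + 1),
      if 0 < j ∧ (m :: β).getD j 0 < (m :: β).getD 0 0 ∧ IsAdmissible (m :: β) 0 j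
        then 1 else 0) = 0 := by
    apply Finset.sum_eq_zero
    intro j hj
    rw [Finset.mem_range] at hj
    rw [if_neg]
    rintro ⟨hj0, hinv, -⟩
    obtain ⟨j', rfl⟩ : ∃ j', j = j' + 1 := ⟨j - 1, by omega⟩
    rw [List.getD_cons_succ, List.getD_cons_zero] at hinv
    exact absurd hinv (by have := h2 _ (getD_mem 0 (show j' < β.length by omega)); omega)
  rw [H0, add_zero]
  apply Finset.sum_congr rfl
  intro i hi
  rw [Finset.mem_range] at hi
  rw [Finset.sum_range_succ']
  have Hz : (if i + 1 < 0 ∧ (m :: β).getD 0 0 < (m :: β).getD (i + 1) 0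
      ∧ IsAdmissible (m :: β) (i + 1) 0 then 1 else 0) = 0 := by
    rw [if_neg]; rintro ⟨h, -, -⟩; omega
  rw [Hz, add_zero]
  apply Finset.sum_congr rfl
  intro j hj
  apply if_congr _ rfl rfl
  rw [List.getD_cons_succ, List.getD_cons_succ, adm_cons]
  constructor
  · rintro ⟨h, hb', hc⟩; exact ⟨by omega, hb', hc⟩
  · rintro ⟨h, hb', hc⟩; exact ⟨by omega, hb', hc⟩

lemma ai_snoc (γ : List ℕ) (m : ℕ) (h1 : ∀ a ∈ γ, m < a) : ai (γ ++ [m]) = ai γ := by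
  unfold ai
  rw [Finset.card_filter, Finset.card_filter, Finset.sum_product, Finset.sum_product]
  have hlen : (γ ++ [m]).length = γ.length + 1 := by
    simp only [List.length_append, List.length_cons, List.length_nil]
  rw [hlen, Finset.sum_range_succ]
  have HG : (∑ j ∈ Finset.range (γ.length + 1),
      if γ.length < j ∧ (γ ++ [m]).getD j 0 < (γ ++ [m]).getD γ.length 0
        ∧ IsAdmissible (γ ++ [m]) γ.length j then 1 else 0) = 0 := by
    apply Finset.sum_eq_zero
    intro j hj
    rw [Finset.mem_range] at hj
    rw [if_neg]
    rintro ⟨hj0, -, -⟩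
    omega
  rw [HG, add_zero]
  apply Finset.sum_congr rfl
  intro i hi
  rw [Finset.mem_range] at hi
  rw [Finset.sum_range_succ]
  have HM : (if i < γ.length ∧ (γ ++ [m]).getD γ.length 0 < (γ ++ [m]).getD i 0
      ∧ IsAdmissible (γ ++ [m]) i γ.length then 1 else 0) = 0 := by
    rw [if_neg]
    rintro ⟨-, -, hadm⟩
    rcases hadm with ⟨hl, -⟩ | ⟨k, hik, hkg, hlt⟩
    · rw [hlen] at hl; omega
    · rw [List.getD_append _ _ _ _ (by omega), getD_mid] at hlt
      have := h1 _ (getD_mem 0 (show k < γ.length by omega))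
      omega
  rw [HM, add_zero]
  apply Finset.sum_congr rfl
  intro j hj
  rw [Finset.mem_range] at hj
  apply if_congr _ rfl rfl
  rw [List.getD_append _ _ _ _ hj, List.getD_append _ _ _ _ hi,
    adm_prefix γ [] m h1 hj]
lemma ai_split (γ β : List ℕ) (m : ℕ) (hγ : γ ≠ []) (hβ : β ≠ [])
    (h1 : ∀ a ∈ γ, m < a) (h2 : ∀ a ∈ β, m < a) :
    ai (γ ++ m :: β) = ai γ + ai β + γ.length + cross γ β := by
  have hb : 1 ≤ β.length := List.length_pos_iff.mpr hβ
  unfold ai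
  rw [Finset.card_filter, Finset.card_filter, Finset.card_filter,
    Finset.sum_product, Finset.sum_product, Finset.sum_product]
  have hlen : (γ ++ m :: β).length = γ.length + 1 + β.length := by
    simp only [List.length_append, List.length_cons]; omega
  rw [hlen, sum_range_split]
  have HA : (∑ i ∈ Finset.range γ.length, ∑ j ∈ Finset.range (γ.length + 1 + β.length),
      if i < j ∧ (γ ++ m :: β).getD j 0 < (γ ++ m :: β).getD i 0
        ∧ IsAdmissible (γ ++ m :: β) i j then 1 else 0)
      = (∑ i ∈ Finset.range γ.length, ∑ j ∈ Finset.range γ.length,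
          if i < j ∧ γ.getD j 0 < γ.getD i 0 ∧ IsAdmissible γ i j then 1 else 0)
        + γ.length + cross γ β := by
    rw [cross_eq_sum]
    calc (∑ i ∈ Finset.range γ.length, ∑ j ∈ Finset.range (γ.length + 1 + β.length),
        if i < j ∧ (γ ++ m :: β).getD j 0 < (γ ++ m :: β).getD i 0
          ∧ IsAdmissible (γ ++ m :: β) i j then 1 else 0)
        = ∑ i ∈ Finset.range γ.length,
            ((∑ j ∈ Finset.range γ.length,
              if i < j ∧ γ.getD j 0 < γ.getD i 0 ∧ IsAdmissible γ i j then 1 else 0)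
            + 1
            + ∑ j ∈ Finset.range β.length,
                if β.getD j 0 < γ.getD i 0 then 1 else 0) := by
          apply Finset.sum_congr rfl
          intro i hi
          rw [Finset.mem_range] at hi
          rw [sum_range_split]
          congr 1
          · congr 1
            · apply Finset.sum_congr rfl
              intro j hj
              rw [Finset.mem_range] at hj
              apply if_congr _ rfl rfl
              rw [List.getD_append _ _ _ _ hj, List.getD_append _ _ _ _ hi,
                adm_prefix γ β m h1 hj]
            · rw [if_pos]
              refine ⟨hi, ?_, ?_⟩
              · rw [getD_mid, List.getD_append _ _ _ _ hi]
                exact h1 _ (getD_mem 0 hi)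
              · left
                constructor
                · rw [hlen]; omega
                · rw [getD_mid, getD_suffix0]
                  exact h2 _ (getD_mem 0 (by omega))
          · apply Finset.sum_congr rfl
            intro j hj
            rw [Finset.mem_range] at hj
            apply if_congr _ rfl rfl
            rw [List.getD_append _ _ _ _ hi, getD_suffix]
            constructor
            · rintro ⟨-, h, -⟩; exact h
            · intro h
              refine ⟨by omega, h, Or.inr ⟨γ.length, hi, by omega, ?_⟩⟩
              rw [getD_mid, getD_suffix]
              exact h2 _ (getD_mem 0 hj)
      _ = _ := by
          rw [Finset.sum_add_distrib, Finset.sum_add_distrib, Finset.sum_const,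
            Finset.card_range, smul_eq_mul, mul_one]
  have HB : (∑ j ∈ Finset.range (γ.length + 1 + β.length),
      if γ.length < j ∧ (γ ++ m :: β).getD j 0 < (γ ++ m :: β).getD γ.length 0
        ∧ IsAdmissible (γ ++ m :: β) γ.length j then 1 else 0) = 0 := by
    apply Finset.sum_eq_zero
    intro j hj
    rw [Finset.mem_range] at hj
    rw [if_neg]
    rintro ⟨hlt, hinv, -⟩
    obtain ⟨j', rfl⟩ : ∃ j', j = γ.length + 1 + j' := ⟨j - (γ.length + 1), by omega⟩
    rw [getD_mid, getD_suffix] at hinv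
    exact absurd hinv (by have := h2 _ (getD_mem 0 (show j' < β.length by omega)); omega)
  have HC : (∑ x ∈ Finset.range β.length, ∑ j ∈ Finset.range (γ.length + 1 + β.length),
      if γ.length + 1 + x < j
        ∧ (γ ++ m :: β).getD j 0 < (γ ++ m :: β).getD (γ.length + 1 + x) 0
        ∧ IsAdmissible (γ ++ m :: β) (γ.length + 1 + x) j then 1 else 0)
      = ∑ i ∈ Finset.range β.length, ∑ j ∈ Finset.range β.length,
          if i < j ∧ β.getD j 0 < β.getD i 0 ∧ IsAdmissible β i j then 1 else 0 := by
    apply Finset.sum_congr rfl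
    intro x hx
    rw [Finset.mem_range] at hx
    rw [sum_range_split]
    have Z1 : (∑ j ∈ Finset.range γ.length,
        if γ.length + 1 + x < j
          ∧ (γ ++ m :: β).getD j 0 < (γ ++ m :: β).getD (γ.length + 1 + x) 0
          ∧ IsAdmissible (γ ++ m :: β) (γ.length + 1 + x) j then 1 else 0) = 0 := by
      apply Finset.sum_eq_zero
      intro j hj
      rw [Finset.mem_range] at hj
      rw [if_neg]
      rintro ⟨h, -, -⟩
      omega
    have Z2 : (if γ.length + 1 + x < γ.length
        ∧ (γ ++ m :: β).getD γ.length 0 < (γ ++ m :: β).getD (γ.length + 1 + x) 0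
        ∧ IsAdmissible (γ ++ m :: β) (γ.length + 1 + x) γ.length then 1 else 0) = 0 := by
      rw [if_neg]
      rintro ⟨h, -, -⟩
      omega
    rw [Z1, Z2, add_zero, zero_add]
    apply Finset.sum_congr rfl
    intro j hj
    rw [Finset.mem_range] at hj
    apply if_congr _ rfl rfl
    rw [getD_suffix, getD_suffix, adm_shift]
    constructor
    · rintro ⟨h, h2', h3⟩; exact ⟨by omega, h2', h3⟩
    · rintro ⟨h, h2', h3⟩; exact ⟨by omega, h2', h3⟩
  rw [HA, HB, HC]
  dsimp only
  omega
lemma aid_split (γ β : List ℕ) (m : ℕ) (hγ : γ ≠ []) (hβ : β ≠ [])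
    (h1 : ∀ a ∈ γ, m < a) (h2 : ∀ a ∈ β, m < a) :
    aid (γ ++ m :: β) = aid γ + aid β + 1 + γ.length + cross γ β := by
  unfold aid
  rw [ai_split γ β m hγ hβ h1 h2, des_split γ β m hγ hβ h1 h2]
  omega

lemma aid_snoc (γ : List ℕ) (m : ℕ) (hγ : γ ≠ []) (h1 : ∀ a ∈ γ, m < a) :
    aid (γ ++ [m]) = aid γ + 1 := by
  unfold aid
  rw [ai_snoc γ m h1, des_snoc γ m hγ h1]
  omega

lemma aid_cons (β : List ℕ) (m : ℕ) (h2 : ∀ a ∈ β, m < a) : aid (m :: β) = aid β := by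
  unfold aid
  rw [ai_cons β m h2, des_cons β m h2]

lemma aid_single (a : ℕ) : aid [a] = 0 := by
  unfold aid ai des
  have h1 : (Finset.range [a].length ×ˢ Finset.range [a].length).filter
      (fun p => p.1 < p.2 ∧ [a].getD p.2 0 < [a].getD p.1 0 ∧ IsAdmissible [a] p.1 p.2) = ∅ := by
    rw [Finset.filter_eq_empty_iff]
    rintro ⟨i, j⟩ hij
    rw [Finset.mem_product, Finset.mem_range, Finset.mem_range] at hij
    rintro ⟨hlt, -, -⟩
    simp only [List.length_cons, List.length_nil] at hij
    omega
  rw [h1]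
  simp

lemma split_min (x : ℕ) (xs : List ℕ) :
    (x :: xs).takeWhile (fun a => decide (a ≠ xs.foldr min x)) ++
      (xs.foldr min x) :: ((x :: xs).dropWhile (fun a => decide (a ≠ xs.foldr min x))).tail
      = x :: xs := by
  have hmem := foldr_min_mem x xs
  have hne : (x :: xs).dropWhile (fun a => decide (a ≠ xs.foldr min x)) ≠ [] := by
    rw [Ne, List.dropWhile_eq_nil_iff]
    push_neg
    exact ⟨_, hmem, by simp⟩
  have hhead : ((x :: xs).dropWhile (fun a => decide (a ≠ xs.foldr min x))).head hne
      = xs.foldr min x := by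
    have := List.head_dropWhile_not (fun a => decide (a ≠ xs.foldr min x)) (l := x :: xs) hne
    simpa using this
  conv_rhs => rw [← List.takeWhile_append_dropWhile
    (p := fun a => decide (a ≠ xs.foldr min x)) (l := x :: xs)]
  congr 1
  have h2 := List.cons_head_tail hne
  rw [hhead] at h2
  exact h2

lemma fkt_perm_aux (k n : ℕ) : ∀ τ : List ℕ, τ.length ≤ n → (fkt k τ).Perm (k :: τ) := by
  induction n with
  | zero =>
    intro τ h
    have : τ = [] := List.length_eq_zero_iff.mp (by omega)
    subst this
    rw [fkt]
  | succ n ih =>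
    intro τ hlen
    cases τ with
    | nil => rw [fkt]
    | cons x xs =>
      rw [fkt]
      have heq := split_min x xs
      set m := xs.foldr min x with hm
      set α := (x :: xs).takeWhile (fun a => decide (a ≠ m)) with hαdef
      set β := ((x :: xs).dropWhile (fun a => decide (a ≠ m))).tail with hβdef
      have hlength : α.length + 1 + β.length = xs.length + 1 := by
        have h' := congrArg List.length heq
        simp only [List.length_append, List.length_cons] at h'
        omega
      simp only [List.length_cons] at hlen
      split_ifs with h1 h2 h3
      · exact List.Perm.refl _
      · rw [h2, List.nil_append] at heq
        have ihβ := ih β (by omega)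
        have p1 : (fkt k β ++ [m]).Perm ((k :: β) ++ [m]) := ihβ.append_right _
        have p2 : ((k :: β) ++ [m]).Perm (k :: m :: β) := (List.perm_append_singleton m β).cons k
        have p3 := p1.trans p2
        rw [heq] at p3
        exact p3
      · rw [h3] at heq
        have p : (k :: m :: α).Perm (k :: (α ++ [m])) := (List.perm_append_singleton m α).symm.cons k
        rw [heq] at p
        exact p
      · rw [← heq]
        exact (ih α (by omega)).append_right _

lemma fkt_perm (k : ℕ) (τ : List ℕ) : (fkt k τ).Perm (k :: τ) :=
  fkt_perm_aux k τ.length τ le_rfl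
lemma aid_nil : aid [] = 0 := by
  unfold aid ai des
  simp

lemma aid_fkt_aux (k n : ℕ) : ∀ τ : List ℕ, τ.length ≤ n → τ.Nodup → k ∉ τ →
    aid (fkt k τ) = aid τ + τ.countP (fun a => decide (a < k)) := by
  induction n with
  | zero =>
    intro τ h _ _
    have : τ = [] := List.length_eq_zero_iff.mp (by omega)
    subst this
    rw [fkt, aid_single, aid_nil]
    simp
  | succ n ih =>
    intro τ hlen hnd hk
    cases τ with
    | nil => rw [fkt, aid_single, aid_nil]; simp
    | cons x xs =>
      rw [fkt]
      have heq := split_min x xs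
      have hmle := foldr_min_le x xs
      set m := xs.foldr min x with hm
      set α := (x :: xs).takeWhile (fun a => decide (a ≠ m)) with hαdef
      set β := ((x :: xs).dropWhile (fun a => decide (a ≠ m))).tail with hβdef
      have hlength : α.length + 1 + β.length = xs.length + 1 := by
        have h' := congrArg List.length heq
        simp only [List.length_append, List.length_cons] at h'
        omega
      simp only [List.length_cons] at hlen
      have hαlt : ∀ a ∈ α, m < a := by
        intro a ha
        rw [hαdef] at ha
        have hmem : a ∈ x :: xs := (List.takeWhile_sublist _).subset ha
        have hne : a ≠ m := by
          have := List.mem_takeWhile_imp ha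
          simpa using this
        have := hmle a hmem
        omega
      have hndαβ : (α ++ m :: β).Nodup := by rw [heq]; exact hnd
      have hmβ : m ∉ β := (List.nodup_cons.mp hndαβ.of_append_right).1
      have hβlt : ∀ a ∈ β, m < a := by
        intro a ha
        have hmem : a ∈ x :: xs := by
          rw [← heq]
          exact List.mem_append_right _ (List.mem_cons_of_mem _ ha)
        have hne : a ≠ m := fun h => hmβ (h ▸ ha)
        have := hmle a hmem
        omega
      have hαnd : α.Nodup := hndαβ.of_append_left
      have hβnd : β.Nodup := (List.nodup_cons.mp hndαβ.of_append_right).2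
      have hkαβ : k ∉ α ∧ k ≠ m ∧ k ∉ β := by
        rw [← heq] at hk
        simp only [List.mem_append, List.mem_cons] at hk
        push_neg at hk
        exact ⟨hk.1, hk.2.1, hk.2.2⟩
      obtain ⟨hkα, hkm, hkβ⟩ := hkαβ
      split_ifs with h1 h2 h3
      · -- k < m : fkt = k :: x :: xs
        have hklt : ∀ a ∈ x :: xs, k < a := fun a ha => lt_of_lt_of_le h1 (hmle a ha)
        rw [aid_cons _ _ hklt]
        have hc0 : (x :: xs).countP (fun a => decide (a < k)) = 0 := by
          rw [List.countP_eq_zero]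
          intro a ha
          simp only [decide_eq_true_eq]
          have := hmle a ha
          omega
        rw [hc0]
        omega
      · -- α = [] : fkt = fkt k β ++ [m]
        have hmk : m < k := by omega
        rw [h2, List.nil_append] at heq
        have hune : fkt k β ≠ [] := by
          have hl := (fkt_perm k β).length_eq
          simp only [List.length_cons] at hl
          intro hcon
          rw [hcon] at hl
          simp at hl
        have hu : ∀ a ∈ fkt k β, m < a := by
          intro a ha
          have hmem : a ∈ k :: β := (fkt_perm k β).mem_iff.mp ha
          rcases List.mem_cons.mp hmem with rfl | hb
          · exact hmk
          · exact hβlt _ hb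
        have hαlen0 : α.length = 0 := by rw [h2]; rfl
        rw [aid_snoc _ _ hune hu, ih β (by omega) hβnd hkβ, ← heq, aid_cons β m hβlt]
        have hcnt : (m :: β).countP (fun a => decide (a < k))
            = β.countP (fun a => decide (a < k)) + 1 := by
          rw [List.countP_cons]
          simp [hmk]
        rw [hcnt]
        omega
      · -- β = [] : fkt = k :: m :: α
        have hmk : m < k := by omega
        rw [h3] at heq
        show aid ([k] ++ m :: α) = _
        rw [aid_split [k] α m (by simp) h2
          (by intro a ha; simp only [List.mem_singleton] at ha; omega) hαlt]
        rw [aid_single, ← heq, aid_snoc α m h2 hαlt,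
          List.countP_append]
        have hc : cross [k] α = α.countP (fun a => decide (a < k)) := by
          simp [cross]
        have hcnt : ([m] : List ℕ).countP (fun a => decide (a < k)) = 1 := by
          simp [hmk]
        rw [hc, hcnt]
        simp only [List.length_singleton]
        omega
      · -- general case : fkt = fkt k α ++ m :: β
        have hmk : m < k := by omega
        have hune : fkt k α ≠ [] := by
          have hl := (fkt_perm k α).length_eq
          simp only [List.length_cons] at hl
          intro hcon
          rw [hcon] at hl
          simp at hl
        have hu : ∀ a ∈ fkt k α, m < a := by
          intro a ha
          have hmem : a ∈ k :: α := (fkt_perm k α).mem_iff.mp ha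
          rcases List.mem_cons.mp hmem with rfl | hb
          · exact hmk
          · exact hαlt _ hb
        rw [aid_split (fkt k α) β m hune h3 hu hβlt, ih α (by omega) hαnd hkα]
        have hlen' : (fkt k α).length = α.length + 1 := by
          have := (fkt_perm k α).length_eq
          simpa using this
        have hcross : cross (fkt k α) β
            = β.countP (fun a => decide (a < k)) + cross α β := by
          rw [cross_perm (fkt_perm k α)]
          simp [cross]
        rw [hlen', hcross, ← heq, aid_split α β m h2 h3 hαlt hβlt, List.countP_append]
        have hcnt : (m :: β).countP (fun a => decide (a < k))
            = β.countP (fun a => decide (a < k)) + 1 := by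
          rw [List.countP_cons]
          simp [hmk]
        rw [hcnt]
        omega

/-- `aid f(k,τ) = aid τ + |τ_{<k}|`. -/
theorem aid_fkt (k : ℕ) (τ : List ℕ) (hτ : τ.Nodup) (hk : k ∉ τ) :
    aid (fkt k τ) = aid τ + τ.countP (fun a => decide (a < k)) :=
  aid_fkt_aux k τ.length τ le_rfl hτ hk

end PaperStats
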